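/- Let f : G → H be a quasi-homomorphism with compact error set C into a topological group H. If the closure of f[X] is compact for a subset X ⊆ G, then for every i ≥ 1 the closure of f[X^i] is compact; indeed cl(f[X^i]) ⊆ cl(f[X])^i · C^(i-1). -/

import Mathlib

open Pointwise

theorem stmt2 {G H : Type*} [Group G] [Group H] [TopologicalSpace H] [IsTopologicalGroup H]
    (C : Set H) (hC : IsCompact C) (X : Set G) (f : G → H)
    (hf : ∀ x y : G, (f y)⁻¹ * (f x)⁻¹ * f (x * y) ∈ C)
    (hX : IsCompact (closure (f '' X))) :
    ∀ i : ℕ, 1 ≤ i → closure (f '' (X ^ i)) ⊆ closure (f '' X) ^ i * C ^ (i - 1) ∧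
      IsCompact (closure (f '' (X ^ i))) := by
  set A := closure (f '' X) with hA
  set N := closure ({1} : Set H) with hN
  -- N commutes with any set
  have hconj : ∀ (c n : H), n ∈ N → c * n * c⁻¹ ∈ N := by
    intro c n hn
    have : (fun h => c * h * c⁻¹) '' closure {1} ⊆ closure ((fun h => c * h * c⁻¹) '' {1}) :=
      image_closure_subset_closure_image
        ((continuous_const.mul continuous_id).mul continuous_const)
    have h2 := this ⟨n, by simpa [hN] using hn, rfl⟩
    simpa [hN] using h2
  have hcomm : ∀ s : Set H, s * N = N * s := by
    intro s
    ext z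
    constructor
    · rintro ⟨c, hc, n, hn, rfl⟩
      exact ⟨c * n * c⁻¹, hconj c n hn, c, hc, by group⟩
    · rintro ⟨n, hn, c, hc, rfl⟩
      refine ⟨c, hc, c⁻¹ * n * c, ?_, by group⟩
      simpa using hconj c⁻¹ n hn
  have hAN : A * N = A := isClosed_closure.mul_closure_one_eq
  have hAc : ∀ i : ℕ, IsCompact (A ^ i) := by
    intro i
    induction i with
    | zero => rw [pow_zero]; exact isCompact_singleton
    | succ n ih => rw [pow_succ]; exact ih.mul hX
  have hCc : ∀ i : ℕ, IsCompact (C ^ i) := by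
    intro i
    induction i with
    | zero => rw [pow_zero]; exact isCompact_singleton
    | succ n ih => rw [pow_succ]; exact ih.mul hC
  -- the target sets are closed
  have hclosed : ∀ j : ℕ, IsClosed (A ^ (j + 1) * C ^ j) := by
    intro j
    have hsat : A ^ (j + 1) * C ^ j * N = A ^ (j + 1) * C ^ j := by
      rw [mul_assoc, hcomm, pow_succ, ← mul_assoc, mul_assoc (A ^ j), hAN]
    have hcpt : IsCompact (A ^ (j + 1) * C ^ j) := (hAc _).mul (hCc _)
    have hcl : closure (A ^ (j + 1) * C ^ j) = A ^ (j + 1) * C ^ j := by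
      rw [← hcpt.mul_closure_one_eq_closure, ← hN, hsat]
    rw [← hcl]
    exact isClosed_closure
  intro i hi
  induction i with
  | zero => omega
  | succ n ih =>
    rcases Nat.lt_or_ge n 1 with h1 | hn
    · -- n = 0, base case
      have hn : n = 0 := by omega
      subst hn
      simp only [zero_add, pow_one, Nat.sub_self, pow_zero, mul_one]
      exact ⟨subset_rfl, hX⟩
    · -- n ≥ 1
      obtain ⟨ihsub, _⟩ := ih hn
      have key : f '' (X ^ (n + 1)) ⊆ A ^ (n + 1) * C ^ n := by
        rintro _ ⟨z, hz, rfl⟩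
        rw [pow_succ'] at hz
        obtain ⟨x, hx, y, hy, rfl⟩ := hz
        have hfx : f x ∈ A := subset_closure ⟨x, hx, rfl⟩
        have hfy : f y ∈ A ^ n * C ^ (n - 1) := ihsub (subset_closure ⟨y, hy, rfl⟩)
        have hc : (f y)⁻¹ * (f x)⁻¹ * f (x * y) ∈ C := hf x y
        have heq : f (x * y) = f x * f y * ((f y)⁻¹ * (f x)⁻¹ * f (x * y)) := by group
        have hmem : f (x * y) ∈ A * (A ^ n * C ^ (n - 1)) * C := by
          rw [heq]
          exact Set.mul_mem_mul (Set.mul_mem_mul hfx hfy) hc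
        have h1 : C ^ (n - 1) * C = C ^ n := by rw [← pow_succ, Nat.sub_add_cancel hn]
        have hseteq : A * (A ^ n * C ^ (n - 1)) * C = A ^ (n + 1) * C ^ n := by
          rw [← h1, pow_succ']
          simp only [mul_assoc]
        rwa [hseteq] at hmem
      have hsub : closure (f '' (X ^ (n + 1))) ⊆ A ^ (n + 1) * C ^ n :=
        (hclosed n).closure_subset_iff.mpr key
      have : (n + 1) - 1 = n := by omega
      rw [this]
      exact ⟨hsub, IsCompact.of_isClosed_subset ((hAc _).mul (hCc _)) isClosed_closure hsub⟩
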